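/- arXiv:2108.03753 — 4 statements merged into one kernel-verified Lean document; each statement's English description precedes it below -/
import Mathlib

section
/- For every real x, ∑_{n=1}^∞ H_n x^n/n! = e^x · ∑_{n=1}^∞ (-1)^{n-1} x^n/(n!·n), where H_n = 1 + 1/2 + ⋯ + 1/n is the n-th harmonic number. -/
open Finset

lemma alt_binom (m : ℕ) (hm : m ≠ 0) :
    ∑ k ∈ range m, (-1 : ℝ) ^ k * (m.choose (k+1)) = 1 := by
  have h := Int.alternating_sum_range_choose_of_ne (n := m) hm
  have h2 : ((∑ i ∈ range (m+1), (-1 : ℤ) ^ i * m.choose i : ℤ) : ℝ) = 0 := by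
    rw [h]; norm_num
  push_cast at h2
  rw [Finset.sum_range_succ'] at h2
  simp at h2
  have : ∑ k ∈ range m, (-1:ℝ)^(k+1) * (m.choose (k+1)) = -1 := by linarith [h2]
  have e : ∀ k, (-1:ℝ)^(k+1) * (m.choose (k+1)) = -((-1:ℝ)^k * (m.choose (k+1))) := by
    intro k; ring
  rw [Finset.sum_congr rfl (fun k _ => e k), Finset.sum_neg_distrib] at this
  linarith

lemma harm_id (n : ℕ) :
    ∑ k ∈ range (n+1), (-1 : ℝ) ^ k * ((n+1).choose (k+1)) / (k+1)
      = ∑ i ∈ range (n+1), (1:ℝ) / (i+1) := by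
  induction n with
  | zero => simp
  | succ n ih =>
    have pascal : ∀ k, ((n+2).choose (k+1) : ℝ) = (n+1).choose (k+1) + (n+1).choose k := by
      intro k
      rw [Nat.choose_succ_succ (n+1) k]; push_cast; ring
    have split : ∑ k ∈ range (n+2), (-1:ℝ)^k * ((n+2).choose (k+1)) / (k+1)
        = (∑ k ∈ range (n+2), (-1:ℝ)^k * ((n+1).choose (k+1)) / (k+1))
          + ∑ k ∈ range (n+2), (-1:ℝ)^k * ((n+1).choose k) / (k+1) := by
      rw [← Finset.sum_add_distrib]
      refine Finset.sum_congr rfl fun k _ => ?_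
      rw [pascal]; ring
    have first : ∑ k ∈ range (n+2), (-1:ℝ)^k * ((n+1).choose (k+1)) / (k+1)
        = ∑ i ∈ range (n+1), (1:ℝ) / (i+1) := by
      rw [Finset.sum_range_succ, Nat.choose_succ_self]
      simpa using ih
    have key : ∀ k, ((n+1).choose k : ℝ) / (k+1) = ((n+2).choose (k+1) : ℝ) / (n+2) := by
      intro k
      have h := Nat.add_one_mul_choose_eq (n+1) k
      have h' : ((n+2) * (n+1).choose k : ℝ) = ((n+2).choose (k+1)) * (k+1) := by
        exact_mod_cast congrArg (Nat.cast : ℕ → ℝ) h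
      field_simp
      linarith [h']
    have second : ∑ k ∈ range (n+2), (-1:ℝ)^k * ((n+1).choose k) / (k+1)
        = 1 / (n+2) := by
      have : ∑ k ∈ range (n+2), (-1:ℝ)^k * ((n+1).choose k) / (k+1)
          = (∑ k ∈ range (n+2), (-1:ℝ)^k * ((n+2).choose (k+1))) / (n+2) := by
        rw [Finset.sum_div]
        refine Finset.sum_congr rfl fun k _ => ?_
        rw [mul_div_assoc, key k, mul_div_assoc]
      rw [this, alt_binom (n+2) (by omega)]
    rw [split, first, second, Finset.sum_range_succ (fun i => (1:ℝ)/(↑i+1)) (n+1)]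
    push_cast; ring

lemma exp_tsum (x : ℝ) : Real.exp x = ∑' m : ℕ, x ^ m / m.factorial := by
  rw [Real.exp_eq_exp_ℝ, NormedSpace.exp_eq_tsum_div]

lemma hf_sum (x : ℝ) : Summable fun m : ℕ => ‖x ^ m / m.factorial‖ := by
  have := Real.summable_pow_div_factorial |x|
  refine this.congr fun m => ?_
  simp [abs_div, abs_pow, Nat.abs_cast]

lemma hg_sum (x : ℝ) :
    Summable fun n : ℕ => ‖(-1 : ℝ) ^ n * x ^ (n+1) / ((n+1).factorial * (n+1))‖ := by
  have hs : Summable fun n : ℕ => |x| * (|x| ^ n / n.factorial) :=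
    (Real.summable_pow_div_factorial |x|).mul_left _
  refine Summable.of_nonneg_of_le (fun n => norm_nonneg _) (fun n => ?_) hs
  rw [norm_div, norm_mul]
  simp only [norm_pow, norm_neg, norm_one, one_pow, one_mul, Real.norm_eq_abs]
  rw [pow_succ]
  have h1 : (0:ℝ) < (n+1).factorial * (n+1) := by positivity
  have h2 : (n.factorial : ℝ) ≤ |((n+1).factorial : ℝ) * ((n:ℝ)+1)| := by
    rw [abs_of_pos h1]
    have : (n.factorial : ℝ) ≤ ((n+1).factorial : ℝ) := by
      exact_mod_cast Nat.factorial_le (Nat.le_succ n)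
    have hp : (0:ℝ) < ((n+1).factorial : ℝ) := by exact_mod_cast (n+1).factorial_pos
    nlinarith [this, hp]
  calc |x| ^ n * |x| / |((n+1).factorial : ℝ) * ((n:ℝ)+1)|
      ≤ |x| ^ n * |x| / (n.factorial : ℝ) := by
        exact div_le_div_of_nonneg_left (by positivity) (by positivity) h2
    _ = |x| * (|x| ^ n / n.factorial) := by ring

lemma coeff_id (N : ℕ) (x : ℝ) :
    ∑ k ∈ Finset.range (N+1), x ^ k / (k.factorial : ℝ)
        * ((-1:ℝ) ^ (N-k) * x ^ (N-k+1) / (((N-k+1).factorial : ℝ) * ((N-k+1 : ℕ) : ℝ)))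
      = (∑ i ∈ Finset.range (N+1), (1:ℝ) / (i+1)) * x ^ (N+1) / ((N+1).factorial : ℝ) := by
  rw [← Finset.sum_range_reflect]
  have step : ∀ j ∈ Finset.range (N+1),
      x ^ (N+1-1-j) / (((N+1-1-j).factorial : ℝ))
        * ((-1:ℝ) ^ (N-(N+1-1-j)) * x ^ (N-(N+1-1-j)+1)
            / (((N-(N+1-1-j)+1).factorial : ℝ) * ((N-(N+1-1-j)+1 : ℕ) : ℝ)))
      = ((-1:ℝ) ^ j * ((N+1).choose (j+1)) / (j+1)) * (x ^ (N+1) / ((N+1).factorial : ℝ)) := by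
    intro j hj
    rw [Finset.mem_range] at hj
    obtain ⟨m, rfl⟩ : ∃ m, N = j + m := ⟨N - j, by omega⟩
    have h1 : j + m + 1 - 1 - j = m := by omega
    rw [h1, Nat.add_sub_cancel]
    have hc := Nat.choose_mul_factorial_mul_factorial
      (show j + 1 ≤ j + m + 1 by omega)
    rw [show j + m + 1 - (j+1) = m from by omega] at hc
    have hcr : ((j+m+1).choose (j+1) : ℝ) * ((j+1).factorial : ℝ) * (m.factorial : ℝ)
        = ((j+m+1).factorial : ℝ) := by exact_mod_cast hc
    have hA : (m.factorial : ℝ) ≠ 0 := by positivity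
    have hB : ((j+1).factorial : ℝ) ≠ 0 := by positivity
    have hC : ((j:ℝ)+1) ≠ 0 := by positivity
    have hD : (((j+m+1).factorial : ℕ) : ℝ) ≠ 0 := by positivity
    field_simp
    push_cast at hcr ⊢
    linear_combination (-(x^(j+m+1) * ((j:ℝ)+1))) * hcr
  rw [Finset.sum_congr rfl step, ← Finset.sum_mul, harm_id N, mul_div_assoc]

theorem stmt_1 (x : ℝ) :
    ∑' n : ℕ, (∑ i ∈ Finset.range (n + 1), (1 : ℝ) / (i + 1)) * x ^ (n + 1) / (n + 1).factorial
      = Real.exp x * ∑' n : ℕ, (-1) ^ n * x ^ (n + 1) / ((n + 1).factorial * (n + 1)) := by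
  rw [exp_tsum x,
    tsum_mul_tsum_eq_tsum_sum_antidiagonal_of_summable_norm (hf_sum x) (hg_sum x)]
  refine tsum_congr fun N => ?_
  rw [Finset.Nat.sum_antidiagonal_eq_sum_range_succ_mk]
  simpa using (coeff_id N x).symm
end

section
/- For every positive integer p and every real x, ∑_{n=1}^∞ (1^p + 2^p + ⋯ + n^p) x^n/n! = E(x,p) + e^x ∫_0^x e^{-t} E(t,p) dt, where E(x,p) = ∑_{n=1}^∞ n^p x^n/n!. -/
open Finset Real

/-- `E p x = ∑_{n=1}^∞ n^p xⁿ/n!`. -/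
noncomputable def E (p : ℕ) (x : ℝ) : ℝ :=
  ∑' n : ℕ, ((n : ℝ) + 1) ^ p * x ^ (n + 1) / (n + 1).factorial

lemma aux_term_norm (p k m : ℕ) (x : ℝ) :
    ‖((k : ℝ) + 1) ^ p * x ^ m / m.factorial‖
      = ((k : ℝ) + 1) ^ p * |x| ^ m / m.factorial := by
  rw [Real.norm_eq_abs, abs_div, abs_mul, abs_pow, abs_pow, Nat.abs_cast]
  congr 2
  rw [abs_of_nonneg (by positivity)]

lemma aux_pow_bound (p n : ℕ) : ((n : ℝ) + 1) ^ p ≤ ((2:ℝ) ^ p) ^ (n + 1) := by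
  have h2 : ((n : ℝ) + 1) ≤ (2:ℝ) ^ (n + 1) := by
    exact_mod_cast (Nat.lt_two_pow_self (n := n + 1)).le
  calc ((n : ℝ) + 1) ^ p ≤ ((2:ℝ) ^ (n + 1)) ^ p :=
        pow_le_pow_left₀ (by positivity) h2 p
    _ = ((2:ℝ) ^ p) ^ (n + 1) := by rw [← pow_mul, ← pow_mul, Nat.mul_comm]

lemma aux_summable_norm (p : ℕ) (x : ℝ) :
    Summable (fun n : ℕ => ((n : ℝ) + 1) ^ p * |x| ^ (n + 1) / (n + 1).factorial) := by
  have base : Summable (fun n : ℕ => ((2:ℝ) ^ p * |x|) ^ (n + 1) / (n + 1).factorial) :=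
    (summable_nat_add_iff 1).2 (Real.summable_pow_div_factorial _)
  refine Summable.of_nonneg_of_le (fun n => by positivity) (fun n => ?_) base
  rw [mul_pow]
  gcongr
  exact aux_pow_bound p n

lemma aux_summable_E (p : ℕ) (x : ℝ) :
    Summable (fun n : ℕ => ((n : ℝ) + 1) ^ p * x ^ (n + 1) / (n + 1).factorial) := by
  apply Summable.of_norm
  exact (aux_summable_norm p x).congr (fun n => (aux_term_norm p n (n+1) x).symm)

lemma aux_deriv_partial (k : ℕ) (t : ℝ) :
    HasDerivAt (fun s : ℝ => ∑ n ∈ range (k + 1), s ^ n / n.factorial)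
      (∑ n ∈ range k, t ^ n / n.factorial) t := by
  have h : HasDerivAt (fun s : ℝ => ∑ n ∈ range (k + 1), s ^ n / n.factorial)
      (∑ n ∈ range (k + 1), (n : ℝ) * t ^ (n - 1) / n.factorial) t := by
    apply HasDerivAt.fun_sum
    intro n _
    simpa [div_eq_mul_inv, mul_comm, mul_assoc, mul_left_comm] using
      ((hasDerivAt_pow n t).div_const (n.factorial : ℝ))
  convert h using 1
  rw [Finset.sum_range_succ']
  simp only [Nat.cast_zero, zero_mul, zero_div, add_zero, Nat.factorial]
  apply Finset.sum_congr rfl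
  intro n _
  rw [Nat.add_sub_cancel]
  push_cast
  have hn : (n.factorial : ℝ) ≠ 0 := Nat.cast_ne_zero.2 n.factorial_ne_zero
  field_simp

lemma aux_ftc (k : ℕ) (x : ℝ) :
    ∫ t in (0:ℝ)..x, Real.exp (-t) * (t ^ k / k.factorial)
      = 1 - Real.exp (-x) * ∑ n ∈ range (k + 1), x ^ n / n.factorial := by
  have key : ∀ t : ℝ, HasDerivAt
      (fun s : ℝ => -(Real.exp (-s) * ∑ n ∈ range (k + 1), s ^ n / n.factorial))
      (Real.exp (-t) * (t ^ k / k.factorial)) t := by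
    intro t
    have he : HasDerivAt (fun s : ℝ => Real.exp (-s)) (-Real.exp (-t)) t := by
      simpa using (hasDerivAt_neg t).exp
    have hs := aux_deriv_partial k t
    have := (he.mul hs).neg
    refine this.congr_deriv ?_
    rw [Finset.sum_range_succ]
    ring
  rw [intervalIntegral.integral_eq_sub_of_hasDerivAt (fun t _ => key t) ?cont]
  case cont =>
    apply Continuous.intervalIntegrable
    continuity
  simp [Finset.sum_range_succ']
  ring

lemma aux_exp_tsum (x : ℝ) : Real.exp x = ∑' n : ℕ, x ^ n / n.factorial := by
  rw [Real.exp_eq_exp_ℝ, NormedSpace.exp_eq_tsum_div]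

lemma aux_tail (k : ℕ) (x : ℝ) :
    Real.exp x - ∑ n ∈ range (k + 1), x ^ n / n.factorial
      = ∑' j : ℕ, x ^ (j + (k + 1)) / (j + (k + 1)).factorial := by
  rw [aux_exp_tsum, sub_eq_iff_eq_add', ← Summable.sum_add_tsum_nat_add (k + 1)
    (Real.summable_pow_div_factorial x)]

lemma aux_group {F : ℕ × ℕ → ℝ} (h : Summable F) :
    ∑' q : ℕ × ℕ, F q = ∑' n : ℕ, ∑ kl ∈ Finset.HasAntidiagonal.antidiagonal n, F kl := by
  conv_rhs => enter [1, n]; rw [← Finset.sum_finset_coe, ← tsum_fintype (L := SummationFilter.unconditional _)]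
  rw [← Finset.HasAntidiagonal.sigmaAntidiagonalEquivProd.tsum_eq F]
  exact Summable.tsum_sigma' (fun n => (hasSum_fintype _).summable)
    (Finset.HasAntidiagonal.sigmaAntidiagonalEquivProd.summable_iff.mpr h)

lemma aux_term_bound (p k n : ℕ) (x : ℝ) (hk : k ≤ n) :
    ‖((k : ℝ) + 1) ^ p * x ^ (n + 1) / (n + 1).factorial‖
      ≤ ((2:ℝ) ^ p * |x|) ^ (n + 1) / (n + 1).factorial := by
  rw [aux_term_norm, mul_pow]
  gcongr
  calc ((k : ℝ) + 1) ^ p ≤ ((2:ℝ) ^ p) ^ (k + 1) := aux_pow_bound p k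
    _ ≤ ((2:ℝ) ^ p) ^ (n + 1) := by
        apply pow_le_pow_right₀ (one_le_pow₀ (by norm_num)) (by omega)

lemma aux_summable_F (p : ℕ) (x : ℝ) :
    Summable (fun q : ℕ × ℕ =>
      ((q.1 : ℝ) + 1) ^ p * x ^ (q.1 + 1 + q.2) / (q.1 + 1 + q.2).factorial) := by
  set y : ℝ := (2:ℝ) ^ p * |x| with hy
  apply Summable.of_norm
  apply Finset.HasAntidiagonal.sigmaAntidiagonalEquivProd.summable_iff.mp
  apply (summable_sigma_of_nonneg (fun _ => norm_nonneg _)).mpr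
  refine ⟨fun n => (hasSum_fintype _).summable, ?_⟩
  have hsum : Summable (fun n : ℕ => y * (y ^ n / n.factorial)) :=
    (Real.summable_pow_div_factorial y).mul_left y
  refine Summable.of_nonneg_of_le (fun n => tsum_nonneg (fun _ => norm_nonneg _))
    (fun n => ?_) hsum
  rw [tsum_fintype]
  have step1 : ∀ kl ∈ (Finset.HasAntidiagonal.antidiagonal n).attach,
      ‖(((kl : ℕ × ℕ).1 : ℝ) + 1) ^ p * x ^ ((kl : ℕ × ℕ).1 + 1 + (kl : ℕ × ℕ).2)
        / ((kl : ℕ × ℕ).1 + 1 + (kl : ℕ × ℕ).2).factorial‖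
        ≤ y ^ (n + 1) / (n + 1).factorial := by
    rintro ⟨kl, hkl⟩ -
    have h1 : kl.1 + kl.2 = n := Finset.HasAntidiagonal.mem_antidiagonal.1 hkl
    have h2 : kl.1 + 1 + kl.2 = n + 1 := by omega
    simp only [h2]
    exact aux_term_bound p kl.1 n x (by omega)
  calc (∑ kl ∈ (Finset.HasAntidiagonal.antidiagonal n).attach,
        ‖(((kl : ℕ × ℕ).1 : ℝ) + 1) ^ p * x ^ ((kl : ℕ × ℕ).1 + 1 + (kl : ℕ × ℕ).2)
          / ((kl : ℕ × ℕ).1 + 1 + (kl : ℕ × ℕ).2).factorial‖)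
      ≤ ∑ _kl ∈ (Finset.HasAntidiagonal.antidiagonal n).attach, y ^ (n + 1) / (n + 1).factorial :=
        Finset.sum_le_sum step1
    _ = (n + 1) * (y ^ (n + 1) / (n + 1).factorial) := by
        rw [Finset.sum_const, Finset.card_attach, Finset.Nat.card_antidiagonal, nsmul_eq_mul]
        push_cast; ring
    _ = y * (y ^ n / n.factorial) := by
        rw [Nat.factorial_succ]
        push_cast
        have h1 : (n.factorial : ℝ) ≠ 0 := Nat.cast_ne_zero.2 n.factorial_ne_zero
        field_simp
        ring

lemma aux_swap (p : ℕ) (x : ℝ) :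
    HasSum (fun m : ℕ => ∫ t in (0:ℝ)..x,
        Real.exp (-t) * (((m : ℝ) + 1) ^ p * t ^ (m + 1) / (m + 1).factorial))
      (∫ t in (0:ℝ)..x, Real.exp (-t) * E p t) := by
  have cont : ∀ m : ℕ, Continuous (fun t : ℝ =>
      Real.exp (-t) * (((m : ℝ) + 1) ^ p * t ^ (m + 1) / (m + 1).factorial)) := by
    intro m
    exact (Real.continuous_exp.comp continuous_neg).mul
      ((continuous_const.mul (continuous_pow (m + 1))).div_const _)
  set f : ℕ → C(ℝ, ℝ) := fun m =>
    ⟨fun t => Real.exp (-t) * (((m : ℝ) + 1) ^ p * t ^ (m + 1) / (m + 1).factorial), cont m⟩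
    with hf
  have key := intervalIntegral.hasSum_intervalIntegral_of_summable_norm
    (a := 0) (b := x) (f := f) ?_
  · convert key using 2 with t
    rfl
    rfl
    unfold E
    funext t
    rw [← tsum_mul_left]
    rfl
  · refine Summable.of_nonneg_of_le (fun m => norm_nonneg _) (fun m => ?_)
      ((aux_summable_norm p x).mul_left (Real.exp |x|))
    apply (ContinuousMap.norm_le _ (by positivity)).2
    rintro ⟨t, ht⟩
    have ht' : t ∈ Set.uIcc 0 x := ht
    rw [Set.uIcc_eq_union] at ht'
    have h1 : min 0 x ≤ t ∧ t ≤ max 0 x := by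
      rcases ht' with h | h <;> rw [Set.mem_Icc] at h <;>
        constructor <;> first
          | exact le_trans (min_le_left _ _) h.1
          | exact le_trans (min_le_right _ _) h.1
          | exact h.2.trans (le_max_left _ _)
          | exact h.2.trans (le_max_right _ _)
    have hlo : -|x| ≤ min 0 x := le_min (neg_nonpos.2 (abs_nonneg x)) (neg_abs_le x)
    have hhi : max 0 x ≤ |x| := max_le (abs_nonneg x) (le_abs_self x)
    have htx : |t| ≤ |x| := abs_le.2 ⟨hlo.trans h1.1, h1.2.trans hhi⟩
    have het : Real.exp (-t) ≤ Real.exp |x| :=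
      Real.exp_le_exp.2 (le_trans (neg_le_abs t) htx)
    rw [ContinuousMap.restrict_apply]
    show ‖Real.exp (-t) * (((m : ℝ) + 1) ^ p * t ^ (m + 1) / (m + 1).factorial)‖ ≤ _
    rw [norm_mul, Real.norm_eq_abs (Real.exp (-t)), abs_of_pos (Real.exp_pos _), aux_term_norm]
    gcongr

lemma aux_sum_shift (p n : ℕ) :
    ∑ k ∈ Finset.Icc 1 (n + 1), (k : ℝ) ^ p
      = ∑ k ∈ Finset.range (n + 1), ((k : ℝ) + 1) ^ p := by
  rw [← Finset.Ico_add_one_right_eq_Icc, Finset.sum_Ico_eq_sum_range]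
  apply Finset.sum_congr (by norm_num)
  intro k _
  push_cast
  ring_nf

theorem stmt_3 (p : ℕ) (hp : 0 < p) (x : ℝ) :
    ∑' n : ℕ, (∑ k ∈ Finset.Icc 1 (n + 1), (k : ℝ) ^ p) * x ^ (n + 1) / (n + 1).factorial
      = E p x + Real.exp x * ∫ t in (0 : ℝ)..x, Real.exp (-t) * E p t := by
  -- the swap of integral and sum
  have hI := aux_swap p x
  -- value of each integral
  have hJ : ∀ m : ℕ, (∫ t in (0:ℝ)..x,
      Real.exp (-t) * (((m : ℝ) + 1) ^ p * t ^ (m + 1) / (m + 1).factorial))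
      = ((m : ℝ) + 1) ^ p *
        (1 - Real.exp (-x) * ∑ n ∈ range (m + 2), x ^ n / n.factorial) := by
    intro m
    have : ∀ t : ℝ, Real.exp (-t) * (((m : ℝ) + 1) ^ p * t ^ (m + 1) / (m + 1).factorial)
        = ((m : ℝ) + 1) ^ p * (Real.exp (-t) * (t ^ (m + 1) / (m + 1).factorial)) := by
      intro t; ring
    simp_rw [this]
    rw [intervalIntegral.integral_const_mul, aux_ftc (m + 1) x]
  -- multiply through by exp x
  set F : ℕ × ℕ → ℝ := fun q =>
    ((q.1 : ℝ) + 1) ^ p * x ^ (q.1 + 1 + q.2) / (q.1 + 1 + q.2).factorial with hF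
  have hFm : ∀ m : ℕ, Summable (fun j : ℕ => F (m, j)) := by
    intro m
    have base : Summable (fun j : ℕ => ((m : ℝ) + 1) ^ p * (x ^ (j + (m + 1)) / (j + (m + 1)).factorial)) :=
      ((summable_nat_add_iff (m + 1)).2 (Real.summable_pow_div_factorial x)).mul_left _
    refine base.congr (fun j => ?_)
    rw [hF]
    simp only []
    rw [Nat.add_comm j (m + 1)]
    ring
  have hx1 : Real.exp x * Real.exp (-x) = 1 := by rw [← Real.exp_add]; simp
  have h3 : HasSum (fun m : ℕ => ((m : ℝ) + 1) ^ p *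
      ∑' j : ℕ, x ^ (j + (m + 2)) / (j + (m + 2)).factorial)
      (Real.exp x * ∫ t in (0:ℝ)..x, Real.exp (-t) * E p t) := by
    have h := hI.mul_left (Real.exp x)
    convert h using 1
    rfl
    funext m
    rw [hJ m, ← aux_tail (m + 1) x]
    linear_combination (((m : ℝ) + 1) ^ p *
      (∑ n ∈ range (m + 2), x ^ n / n.factorial)) * hx1
  have hE : HasSum (fun m : ℕ => ((m : ℝ) + 1) ^ p * x ^ (m + 1) / (m + 1).factorial)
      (E p x) := (aux_summable_E p x).hasSum
  have h4 := hE.add h3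
  rw [← h4.tsum_eq]
  refine Eq.symm ?_
  -- now both sides are explicit tsums
  have step5 : ∀ m : ℕ,
      ((m : ℝ) + 1) ^ p * x ^ (m + 1) / (m + 1).factorial
        + ((m : ℝ) + 1) ^ p * ∑' j : ℕ, x ^ (j + (m + 2)) / (j + (m + 2)).factorial
      = ∑' j : ℕ, F (m, j) := by
    intro m
    rw [Summable.tsum_eq_zero_add (hFm m)]
    congr 1
    rw [← tsum_mul_left]
    apply tsum_congr
    intro j
    rw [hF]
    simp only []
    rw [show m + 1 + (j + 1) = j + (m + 2) from by omega]
    ring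
  calc ∑' m : ℕ, (((m : ℝ) + 1) ^ p * x ^ (m + 1) / (m + 1).factorial
        + ((m : ℝ) + 1) ^ p * ∑' j : ℕ, x ^ (j + (m + 2)) / (j + (m + 2)).factorial)
      = ∑' m : ℕ, ∑' j : ℕ, F (m, j) := tsum_congr step5
    _ = ∑' q : ℕ × ℕ, F q := (Summable.tsum_prod' (aux_summable_F p x) hFm).symm
    _ = ∑' n : ℕ, ∑ kl ∈ Finset.HasAntidiagonal.antidiagonal n, F kl := aux_group (aux_summable_F p x)
    _ = ∑' n : ℕ, (∑ k ∈ Finset.Icc 1 (n + 1), (k : ℝ) ^ p) * x ^ (n + 1) / (n + 1).factorial := by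
        apply tsum_congr
        intro n
        rw [Finset.Nat.sum_antidiagonal_eq_sum_range_succ_mk, aux_sum_shift p n,
          Finset.sum_mul, Finset.sum_div]
        apply Finset.sum_congr rfl
        intro k hk
        have hk' : k ≤ n := by simpa using Nat.lt_succ_iff.mp (Finset.mem_range.mp hk)
        rw [hF]
        simp only []
        rw [show k + 1 + (n - k) = n + 1 from by omega]
end

section
/- For every nonnegative integer p and every real x with |x| < 1, ∑_{n=0}^∞ n^p x^n = (1/(1-x)) · ω_p(x/(1-x)), where ω_p(x) = ∑_{k=0}^p S(p,k) k! x^k is the p-th geometric polynomial (using the convention 0^0 = 1). -/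
open Finset Real

/-- Stirling numbers of the second kind. -/
def stirling2 : ℕ → ℕ → ℕ
  | 0, 0 => 1
  | 0, _ + 1 => 0
  | _ + 1, 0 => 0
  | p + 1, k + 1 => (k + 1) * stirling2 p (k + 1) + stirling2 p k

/-- The geometric (Fubini) polynomial. -/
noncomputable def geomPoly (p : ℕ) (x : ℝ) : ℝ :=
  ∑ k ∈ Finset.range (p + 1), (stirling2 p k : ℝ) * k.factorial * x ^ k

lemma stirling2_zero_right : ∀ p, 0 < p → stirling2 p 0 = 0
  | _ + 1, _ => rfl

lemma stirling2_eq_zero_of_lt : ∀ p k, p < k → stirling2 p k = 0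
  | 0, _ + 1, _ => rfl
  | p + 1, k + 1, h => by
    rw [stirling2, stirling2_eq_zero_of_lt p (k+1) (by omega),
      stirling2_eq_zero_of_lt p k (by omega)]
    simp

-- real choose identity
lemma choose_id (n k : ℕ) :
    (n : ℝ) * n.choose k = k * n.choose k + (k + 1) * n.choose (k + 1) := by
  rcases le_or_gt k n with h | h
  · have := Nat.choose_succ_right_eq n k
    have h2 : (n.choose (k+1) : ℝ) * (k+1) = n.choose k * ((n:ℝ) - k) := by
      rw [← Nat.cast_sub h]; exact_mod_cast this
    ring_nf
    ring_nf at h2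
    linarith
  · rw [Nat.choose_eq_zero_of_lt h, Nat.choose_eq_zero_of_lt (by omega)]
    simp

lemma pow_eq_sum (p n : ℕ) :
    (n : ℝ) ^ p = ∑ k ∈ Finset.range (p + 1),
      (stirling2 p k : ℝ) * k.factorial * n.choose k := by
  induction p with
  | zero => simp [stirling2]
  | succ p ih =>
    have : (n : ℝ) ^ (p + 1) = ∑ k ∈ Finset.range (p + 1),
        (stirling2 p k : ℝ) * k.factorial * (n * n.choose k) := by
      rw [pow_succ, ih, Finset.sum_mul]
      exact Finset.sum_congr rfl fun k _ => by ring
    rw [this]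
    have key : ∀ k ∈ Finset.range (p + 1),
        (stirling2 p k : ℝ) * k.factorial * (n * n.choose k)
          = (stirling2 p k : ℝ) * k.factorial * k * n.choose k
            + (stirling2 p k : ℝ) * (k+1).factorial * n.choose (k+1) := by
      intro k _
      rw [choose_id n k]
      have : ((k+1).factorial : ℝ) = (k+1) * k.factorial := by
        push_cast [Nat.factorial_succ]; ring
      rw [this]; ring
    rw [Finset.sum_congr rfl key, Finset.sum_add_distrib]
    -- RHS: split off k = 0 (stirling2 (p+1) 0 = 0)
    rw [Finset.sum_range_succ' _ (p+1)]
    simp only [stirling2_zero_right (p+1) (Nat.succ_pos p), Nat.cast_zero, zero_mul]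
    rw [add_zero]
    -- RHS now ∑ k ∈ range (p+1), stirling2 (p+1) (k+1) * (k+1)! * choose n (k+1)
    have rhs : ∀ k ∈ Finset.range (p+1),
        (stirling2 (p+1) (k+1) : ℝ) * (k+1).factorial * n.choose (k+1)
          = ((k+1) * stirling2 p (k+1) : ℝ) * (k+1).factorial * n.choose (k+1)
            + (stirling2 p k : ℝ) * (k+1).factorial * n.choose (k+1) := by
      intro k _
      rw [show stirling2 (p+1) (k+1) = (k+1) * stirling2 p (k+1) + stirling2 p k from rfl]
      push_cast; ring
    rw [Finset.sum_congr rfl rhs, Finset.sum_add_distrib]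
    congr 1
    -- first sums equal: ∑ k ∈ range (p+1), S p k * k! * k * C n k
    --   = ∑ k ∈ range (p+1), (k+1) S p (k+1) * (k+1)! * C n (k+1)
    rw [Finset.sum_range_succ' (fun k => (stirling2 p k : ℝ) * k.factorial * k * n.choose k) p]
    simp only [Nat.cast_zero, mul_zero, zero_mul, add_zero]
    rw [Finset.sum_range_succ]
    rw [stirling2_eq_zero_of_lt p (p+1) (by omega)]
    push_cast
    simp only [zero_mul, mul_zero, add_zero]
    exact Finset.sum_congr rfl fun k _ => by
      have : ((k+1).factorial : ℝ) = (k+1) * k.factorial := by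
        push_cast [Nat.factorial_succ]; ring
      rw [this]; ring

lemma hasSum_choose (k : ℕ) {x : ℝ} (hx : |x| < 1) :
    HasSum (fun n : ℕ => (n.choose k : ℝ) * x ^ n) (x ^ k / (1 - x) ^ (k + 1)) := by
  have hx' : ‖x‖ < 1 := by rwa [Real.norm_eq_abs]
  have h2 : HasSum (fun n : ℕ => ((n + k).choose k : ℝ) * x ^ (n + k))
      (x ^ k / (1 - x) ^ (k + 1)) := by
    have h := (hasSum_choose_mul_geometric_of_norm_lt_one k hx').mul_left (x ^ k)
    rw [mul_one_div] at h
    have e : (fun n : ℕ => ((n + k).choose k : ℝ) * x ^ (n + k))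
        = fun i : ℕ => x ^ k * (((i + k).choose k : ℝ) * x ^ i) := by
      funext n
      rw [pow_add]; ring
    rw [e]; exact h
  rw [show (fun n : ℕ => ((n + k).choose k : ℝ) * x ^ (n + k))
      = (fun n : ℕ => (n.choose k : ℝ) * x ^ n) ∘ (· + k) from rfl] at h2
  have := (hasSum_nat_add_iff (f := fun n : ℕ => (n.choose k : ℝ) * x ^ n) k).mp h2
  have hz : ∑ i ∈ Finset.range k, (i.choose k : ℝ) * x ^ i = 0 :=
    Finset.sum_eq_zero fun i hi => by
      rw [Nat.choose_eq_zero_of_lt (Finset.mem_range.mp hi)]; simp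
  rw [hz, add_zero] at this
  exact this

theorem stmt_11 (p : ℕ) (x : ℝ) (hx : |x| < 1) :
    ∑' n : ℕ, (n : ℝ) ^ p * x ^ n = (1 / (1 - x)) * geomPoly p (x / (1 - x)) := by
  have h1 : (1 : ℝ) - x ≠ 0 := by
    intro h; rw [abs_lt] at hx; nlinarith
  have H : HasSum (fun n : ℕ => (n : ℝ) ^ p * x ^ n)
      (∑ k ∈ Finset.range (p + 1),
        (stirling2 p k : ℝ) * k.factorial * (x ^ k / (1 - x) ^ (k + 1))) := by
    have H' : HasSum
        (fun n : ℕ => ∑ k ∈ Finset.range (p + 1),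
          (stirling2 p k : ℝ) * k.factorial * ((n.choose k : ℝ) * x ^ n))
        (∑ k ∈ Finset.range (p + 1),
          (stirling2 p k : ℝ) * k.factorial * (x ^ k / (1 - x) ^ (k + 1))) :=
      hasSum_sum fun k _ => (hasSum_choose k hx).mul_left _
    have heq : (fun n : ℕ => (n : ℝ) ^ p * x ^ n)
        = fun n : ℕ => ∑ k ∈ Finset.range (p + 1),
          (stirling2 p k : ℝ) * k.factorial * ((n.choose k : ℝ) * x ^ n) := by
      funext n
      rw [pow_eq_sum p n, Finset.sum_mul]
      exact Finset.sum_congr rfl fun k _ => by ring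
    rw [heq]
    exact H'
  rw [H.tsum_eq, geomPoly, Finset.mul_sum]
  refine Finset.sum_congr rfl fun k _ => ?_
  rw [div_pow]
  field_simp
  ring
end

section
/- For every positive integer p and every real x with |x| < 1, ∑_{n=1}^∞ n^p (1/(1-x) - 1 - x - x² - ⋯ - x^n) = (x/(1-x)²) · ω_p(x/(1-x)). -/
open Finset Real

lemma stirling2_eq_zero : ∀ p k : ℕ, p < k → stirling2 p k = 0
  | 0, _ + 1, _ => rfl
  | p + 1, k + 1, h => by
      have h1 := stirling2_eq_zero p (k + 1) (by omega)
      have h2 := stirling2_eq_zero p k (by omega)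
      simp [stirling2, h1, h2]

lemma mul_descFactorial (n k : ℕ) :
    n * n.descFactorial k = n.descFactorial (k + 1) + k * n.descFactorial k := by
  rcases le_or_gt k n with h | h
  · rw [Nat.descFactorial_succ, ← add_mul, Nat.sub_add_cancel h]
  · rw [Nat.descFactorial_eq_zero_iff_lt.2 h,
      Nat.descFactorial_eq_zero_iff_lt.2 (Nat.lt_succ_of_lt h)]
    ring

lemma stirling_sum (p n : ℕ) :
    n ^ p = ∑ k ∈ Finset.range (p + 1), stirling2 p k * n.descFactorial k := by
  induction p with
  | zero => simp [stirling2]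
  | succ p ih =>
    have step : n ^ (p + 1) = ∑ k ∈ Finset.range (p + 1),
        stirling2 p k * (n.descFactorial (k + 1) + k * n.descFactorial k) := by
      simp_rw [← mul_descFactorial]
      rw [pow_succ, ih, Finset.sum_mul]
      exact Finset.sum_congr rfl fun k _ => by ring
    have hrec : ∀ k, stirling2 (p + 1) (k + 1)
        = (k + 1) * stirling2 p (k + 1) + stirling2 p k := fun k => rfl
    have key : ∑ k ∈ Finset.range (p + 1), k * stirling2 p k * n.descFactorial k
        = ∑ k ∈ Finset.range (p + 1),
            (k + 1) * stirling2 p (k + 1) * n.descFactorial (k + 1) := by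
      rw [Finset.sum_range_succ' (fun k => k * stirling2 p k * n.descFactorial k) p,
        Finset.sum_range_succ
          (fun k => (k + 1) * stirling2 p (k + 1) * n.descFactorial (k + 1)) p,
        stirling2_eq_zero p (p + 1) (by omega)]
      simp
    rw [step, Finset.sum_range_succ' (fun k => stirling2 (p + 1) k * n.descFactorial k) (p + 1)]
    have h0 : stirling2 (p + 1) 0 = 0 := rfl
    rw [h0]
    simp only [zero_mul, add_zero]
    have lhs_eq : ∑ k ∈ Finset.range (p + 1),
        stirling2 p k * (n.descFactorial (k + 1) + k * n.descFactorial k)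
        = (∑ k ∈ Finset.range (p + 1), stirling2 p k * n.descFactorial (k + 1))
          + ∑ k ∈ Finset.range (p + 1), k * stirling2 p k * n.descFactorial k := by
      rw [← Finset.sum_add_distrib]
      exact Finset.sum_congr rfl fun k _ => by ring
    have rhs_eq : ∑ k ∈ Finset.range (p + 1),
        stirling2 (p + 1) (k + 1) * n.descFactorial (k + 1)
        = (∑ k ∈ Finset.range (p + 1),
            (k + 1) * stirling2 p (k + 1) * n.descFactorial (k + 1))
          + ∑ k ∈ Finset.range (p + 1), stirling2 p k * n.descFactorial (k + 1) := by
      rw [← Finset.sum_add_distrib]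
      exact Finset.sum_congr rfl fun k _ => by rw [hrec]; ring
    rw [lhs_eq, rhs_eq, key]
    omega

lemma hasSum_pow_geom (p : ℕ) {x : ℝ} (hx : |x| < 1) :
    HasSum (fun n : ℕ => (n : ℝ) ^ p * x ^ n)
      (∑ k ∈ Finset.range (p + 1),
        (stirling2 p k : ℝ) * k.factorial * (x ^ k / (1 - x) ^ (k + 1))) := by
  have H := hasSum_sum (f := fun k (n : ℕ) =>
      (stirling2 p k : ℝ) * k.factorial * ((n.choose k : ℝ) * x ^ n))
    (s := Finset.range (p + 1))
    (fun k _ => (hasSum_choose k hx).mul_left _)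
  convert H using 2 with n
  have hcast : ((n : ℝ)) ^ p = ∑ k ∈ Finset.range (p + 1),
      (stirling2 p k : ℝ) * (n.descFactorial k : ℝ) := by
    exact_mod_cast congrArg (Nat.cast : ℕ → ℝ) (stirling_sum p n)
  rw [hcast, Finset.sum_mul]
  exact Finset.sum_congr rfl fun k _ => by
    rw [Nat.descFactorial_eq_factorial_mul_choose]
    push_cast
    ring

theorem stmt_13 (p : ℕ) (hp : 0 < p) (x : ℝ) (hx : |x| < 1) :
    ∑' n : ℕ, ((n : ℝ) + 1) ^ p * (1 / (1 - x) - ∑ j ∈ Finset.range (n + 2), x ^ j)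
      = (x / (1 - x) ^ 2) * geomPoly p (x / (1 - x)) := by
  obtain ⟨hx1, hx2⟩ := abs_lt.1 hx
  have hxne : x ≠ 1 := ne_of_lt hx2
  have h1 : (1 : ℝ) - x ≠ 0 := sub_ne_zero.2 (Ne.symm hxne)
  have h2 : x - 1 ≠ 0 := sub_ne_zero.2 hxne
  have hterm : ∀ n : ℕ, ((n : ℝ) + 1) ^ p * (1 / (1 - x) - ∑ j ∈ Finset.range (n + 2), x ^ j)
      = (x / (1 - x)) * (((n : ℝ) + 1) ^ p * x ^ (n + 1)) := by
    intro n
    rw [geom_sum_eq hxne]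
    have e : (x ^ (n + 2) - 1) / (x - 1) = (1 - x ^ (n + 2)) / (1 - x) := by
      rw [div_eq_div_iff h2 h1]; ring
    rw [e, div_sub_div_same, sub_sub_cancel]
    field_simp
    ring
  have S := hasSum_pow_geom p hx
  have S1 := (hasSum_nat_add_iff' (f := fun n : ℕ => (n : ℝ) ^ p * x ^ n) 1).2 S
  have hz : ∑ i ∈ Finset.range 1, (i : ℝ) ^ p * x ^ i = 0 := by
    simp [zero_pow hp.ne']
  rw [hz, sub_zero] at S1
  push_cast at S1
  have S2 := (S1.mul_left (x / (1 - x))).tsum_eq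
  calc ∑' n : ℕ, ((n : ℝ) + 1) ^ p * (1 / (1 - x) - ∑ j ∈ Finset.range (n + 2), x ^ j)
      = ∑' n : ℕ, (x / (1 - x)) * (((n : ℝ) + 1) ^ p * x ^ (n + 1)) := tsum_congr hterm
    _ = (x / (1 - x)) * ∑ k ∈ Finset.range (p + 1),
        (stirling2 p k : ℝ) * k.factorial * (x ^ k / (1 - x) ^ (k + 1)) := S2
    _ = (x / (1 - x) ^ 2) * geomPoly p (x / (1 - x)) := by
        rw [geomPoly, Finset.mul_sum, Finset.mul_sum]
        refine Finset.sum_congr rfl fun k _ => ?_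
        rw [div_pow]
        field_simp
        ring_nf
end
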